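/- If D is a weakly locally finite division ring with center F, then the center of the derived group D' = [D*, D*] is a torsion group; equivalently, every element of D' ∩ F has finite multiplicative order. -/

import Mathlib

/-- A division ring is weakly locally finite if every finite subset generates a
division subring which is finite-dimensional over its own center. -/
def IsWeaklyLocallyFinite (D : Type*) [DivisionRing D] : Prop :=
  ∀ S : Finset D,
    Module.Finite (Subring.center (Subfield.closure (S : Set D)))
      (Subfield.closure (S : Set D))

open scoped commutatorElement

/-- Every element of the commutator subgroup is a finite product of commutators. -/
theorem exists_list_pairs_of_mem_commutator {G : Type*} [Group G] {x : G}
    (hx : x ∈ commutator G) :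
    ∃ lp : List (G × G), (lp.map fun p => ⁅p.1, p.2⁆).prod = x := by
  rw [commutator_eq_closure] at hx
  have hx' : x ∈ (Subgroup.closure (commutatorSet G)).toSubmonoid := hx
  rw [Subgroup.closure_toSubmonoid] at hx'
  obtain ⟨l, hl, rfl⟩ := Submonoid.exists_list_of_mem_closure hx'
  clear hx hx'
  induction l with
  | nil => exact ⟨[], rfl⟩
  | cons a l ih =>
    obtain ⟨lp, hlp⟩ := ih fun y hy => hl y (List.mem_cons_of_mem _ hy)
    have ha := hl a (List.mem_cons_self (a := a) (l := l))
    have : a ∈ commutatorSet G := by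
      rcases ha with h | h
      · exact h
      · obtain ⟨g₁, g₂, hg⟩ := Set.mem_inv.mp h
        exact ⟨g₂, g₁, by rw [← commutatorElement_inv, hg, inv_inv]⟩
    obtain ⟨g₁, g₂, rfl⟩ := this
    exact ⟨(g₁, g₂) :: lp, by simp [hlp]⟩

set_option maxHeartbeats 1000000 in
set_option synthInstance.maxHeartbeats 200000 in
/-- If `D` is a weakly locally finite division ring with center `F`, then the center
of the derived group `D' = [D*, D*]` is torsion: every element of `D' ∩ F`
has finite multiplicative order. -/
theorem stmt_6 (D : Type*) [DivisionRing D] (hD : IsWeaklyLocallyFinite D) :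
    ∀ x : Dˣ, x ∈ commutator Dˣ → (x : D) ∈ Subring.center D →
      ∃ n : ℕ, 0 < n ∧ x ^ n = 1 := by
  classical
  intro x hx hxc
  obtain ⟨lp, hlp⟩ := exists_list_pairs_of_mem_commutator hx
  -- the finite set of all entries of the commutators
  set S : Finset D :=
    ((lp.map fun p => ((p.1 : D))) ++ lp.map fun p => ((p.2 : D))).toFinset with hS
  set L : Subfield D := Subfield.closure (S : Set D) with hL
  haveI : Module.Finite (Subring.center L) L := hD S
  set K := Subring.center L with hK
  -- every commutator from the list lies in L and has norm 1
  have hmemL : ∀ p ∈ lp, ((⁅p.1, p.2⁆ : Dˣ) : D) ∈ L := by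
    intro p hp
    have h1 : ((p.1 : Dˣ) : D) ∈ L := by
      apply Subfield.subset_closure
      simp only [hS, Finset.coe_sort_coe, Finset.mem_coe, List.mem_toFinset, List.mem_append,
        List.mem_map]
      exact Or.inl ⟨p, hp, rfl⟩
    have h2 : ((p.2 : Dˣ) : D) ∈ L := by
      apply Subfield.subset_closure
      simp only [hS, Finset.coe_sort_coe, Finset.mem_coe, List.mem_toFinset, List.mem_append,
        List.mem_map]
      exact Or.inr ⟨p, hp, rfl⟩
    have : ((⁅p.1, p.2⁆ : Dˣ) : D) =
        (((⟨_, h1⟩ : L) * ⟨_, h2⟩ * (⟨_, h1⟩ : L)⁻¹ * (⟨_, h2⟩ : L)⁻¹ : L) : D) := by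
      push_cast
      rw [commutatorElement_def]
      push_cast
      rfl
    rw [this]
    exact Subtype.mem _
  have key : ∀ p ∈ lp, ∀ h : ((⁅p.1, p.2⁆ : Dˣ) : D) ∈ L,
      Algebra.norm K (⟨_, h⟩ : L) = 1 := by
    intro p hp h
    have h1 : ((p.1 : Dˣ) : D) ∈ L := by
      apply Subfield.subset_closure
      simp only [hS, Finset.coe_sort_coe, Finset.mem_coe, List.mem_toFinset, List.mem_append,
        List.mem_map]
      exact Or.inl ⟨p, hp, rfl⟩
    have h2 : ((p.2 : Dˣ) : D) ∈ L := by
      apply Subfield.subset_closure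
      simp only [hS, Finset.coe_sort_coe, Finset.mem_coe, List.mem_toFinset, List.mem_append,
        List.mem_map]
      exact Or.inr ⟨p, hp, rfl⟩
    set a : L := ⟨_, h1⟩ with ha
    set b : L := ⟨_, h2⟩ with hb
    have ha0 : a ≠ 0 := by
      intro h
      exact (p.1 : Dˣ).ne_zero (congrArg Subtype.val h)
    have hb0 : b ≠ 0 := by
      intro h
      exact (p.2 : Dˣ).ne_zero (congrArg Subtype.val h)
    have heq : (⟨_, h⟩ : L) = a * b * a⁻¹ * b⁻¹ := by
      ext
      push_cast
      rw [commutatorElement_def]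
      push_cast
      rfl
    have hcomm : Algebra.norm K a * Algebra.norm K b * Algebra.norm K a⁻¹ *
        Algebra.norm K b⁻¹ =
        (Algebra.norm K a * Algebra.norm K a⁻¹) *
          (Algebra.norm K b * Algebra.norm K b⁻¹) := by ring
    rw [heq, map_mul, map_mul, map_mul, hcomm, ← map_mul, ← map_mul,
      mul_inv_cancel₀ ha0, mul_inv_cancel₀ hb0, map_one, mul_one]
  -- the list of commutators, viewed inside L
  set l' : List L := lp.pmap (fun (p : Dˣ × Dˣ) (h : ((⁅p.1, p.2⁆ : Dˣ) : D) ∈ L) => (⟨_, h⟩ : L)) hmemL with hl'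
  have hxz : (x : D) = ((l'.prod : L) : D) := by
    rw [← hlp]
    have h1 : (((lp.map fun p => ⁅p.1, p.2⁆).prod : Dˣ) : D) =
        (lp.map fun p => ((⁅p.1, p.2⁆ : Dˣ) : D)).prod := by
      have := map_list_prod (Units.coeHom D) (lp.map fun p => ⁅p.1, p.2⁆)
      rw [List.map_map] at this
      exact this
    have h2 : ((l'.prod : L) : D) = (l'.map fun z => ((z : L) : D)).prod := by
      have := map_list_prod (L.subtype) l'
      exact this
    rw [h1, h2, hl', List.map_pmap]
    congr 1
    exact (List.pmap_eq_map hmemL).symm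
  have hxL : (x : D) ∈ L := by
    rw [hxz]; exact Subtype.mem _
  -- the norm of x is 1
  have hnorm : Algebra.norm K (⟨_, hxL⟩ : L) = 1 := by
    have : (⟨(x : D), hxL⟩ : L) = l'.prod := Subtype.ext hxz
    rw [this, map_list_prod (Algebra.norm K) l']
    apply List.prod_eq_one
    intro y hy
    simp only [List.mem_map] at hy
    obtain ⟨z, hz, rfl⟩ := hy
    rw [hl', List.mem_pmap] at hz
    obtain ⟨p, hp, rfl⟩ := hz
    exact key p hp (hmemL p hp)
  -- x is central in L
  have hxK : (⟨_, hxL⟩ : L) ∈ Subring.center L := by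
    rw [Subring.mem_center_iff]
    intro g
    ext
    push_cast
    exact Subring.mem_center_iff.mp hxc (g : D)
  -- so x is (the image of) an element of K
  have hxalg : (⟨_, hxL⟩ : L) = algebraMap K L ⟨⟨_, hxL⟩, hxK⟩ := rfl
  have hfin : 0 < Module.finrank K L := Module.finrank_pos
  refine ⟨Module.finrank K L, hfin, ?_⟩
  rw [hxalg, Algebra.norm_algebraMap] at hnorm
  have hxpow : (⟨⟨_, hxL⟩, hxK⟩ : K) ^ Module.finrank K L = 1 := hnorm
  have hD1 : ((x : D)) ^ Module.finrank K L = 1 := by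
    have := congrArg (fun z : K => ((z : L) : D)) hxpow
    simpa using this
  ext
  push_cast
  exact hD1
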